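/- arXiv:1803.10620 — 6 statements merged into one kernel-verified Lean document; each statement's English description precedes it below -/
import Mathlib

section
/- Two nonzero homogeneous derivations ∂_{ρ,e} and ∂_{ρ',e'} commute if and only if either (1) ρ and ρ' are collinear and ⟨ρ,e⟩ = ⟨ρ,e'⟩, or (2) ρ and ρ' are non-collinear and ⟨ρ',e⟩ = ⟨ρ,e'⟩ = 0. -/
/-- The homogeneous derivation `∂_{ρ,e}` of the (semi)group algebra, defined on the
monomial basis by `∂_{ρ,e}(χ^m) = ⟨ρ,m⟩ χ^{m+e}`. -/
noncomputable def homDer (K : Type*) [Field K] {M : Type*} [AddCommGroup M]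
    (ρ : M →+ ℤ) (e : M) :
    AddMonoidAlgebra K M →ₗ[K] AddMonoidAlgebra K M :=
  (Finsupp.lsum K fun m =>
    LinearMap.toSpanSingleton K (AddMonoidAlgebra K M)
      ((ρ m : ℤ) • AddMonoidAlgebra.single (m + e) (1 : K))) ∘ₗ
    (AddMonoidAlgebra.coeffLinearEquiv K).toLinearMap

/-- Collinearity of two lattice covectors. -/
def CollinearCovectors {M : Type*} [AddCommGroup M] (ρ ρ' : M →+ ℤ) : Prop :=
  ∃ a b : ℤ, (a ≠ 0 ∨ b ≠ 0) ∧ a • ρ = b • ρ'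

lemma homDer_single (K : Type*) [Field K] {M : Type*} [AddCommGroup M]
    (ρ : M →+ ℤ) (e : M) (m : M) (c : K) :
    homDer K ρ e (AddMonoidAlgebra.single m c) = (ρ m : K) • AddMonoidAlgebra.single (m + e) c := by
  simp only [homDer, LinearMap.comp_apply, LinearEquiv.coe_coe,
    AddMonoidAlgebra.coeffLinearEquiv_apply, AddMonoidAlgebra.coeff_single, Finsupp.lsum_single]
  rw [LinearMap.toSpanSingleton_apply,
    ← Int.cast_smul_eq_zsmul K, smul_comm, AddMonoidAlgebra.smul_single,
    smul_eq_mul, mul_one]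

lemma lm_ext {K : Type*} [Field K] {M : Type*} [AddCommGroup M]
    {f g : AddMonoidAlgebra K M →ₗ[K] AddMonoidAlgebra K M}
    (H : ∀ (m : M) (c : K), f (AddMonoidAlgebra.single m c) = g (AddMonoidAlgebra.single m c)) : f = g :=
  AddMonoidAlgebra.lhom_ext' fun x => LinearMap.ext fun c => by simpa using H x c

lemma smul_single_inj {K : Type*} [Field K] {M : Type*} [AddCommGroup M]
    (x : M) (a b : K) (h : a • AddMonoidAlgebra.single x (1 : K) = b • AddMonoidAlgebra.single x (1 : K)) :
    a = b := by
  rw [AddMonoidAlgebra.smul_single, AddMonoidAlgebra.smul_single] at h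
  simpa using AddMonoidAlgebra.single_right_inj.mp h

lemma homDer_eq_zero (K : Type*) [Field K] {M : Type*} [AddCommGroup M]
    (e : M) : homDer K (0 : M →+ ℤ) e = 0 := by
  apply lm_ext
  intro a b
  rw [homDer_single]
  simp

lemma smul_covec_ne_zero {M : Type*} [AddCommGroup M] {b : ℤ} {ρ : M →+ ℤ}
    (hb : b ≠ 0) (hρ : ρ ≠ 0) : b • ρ ≠ 0 := by
  intro hz
  apply hρ
  ext m
  have := DFunLike.congr_fun hz m
  simp only [AddMonoidHom.smul_apply, smul_eq_mul, AddMonoidHom.zero_apply,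
    mul_eq_zero] at this ⊢
  tauto

/-- two nonzero homogeneous derivations `∂_{ρ,e}`, `∂_{ρ',e'}` commute iff
either (1) `ρ, ρ'` are collinear and `⟨ρ,e⟩ = ⟨ρ,e'⟩`, or (2) `ρ, ρ'` are non-collinear
and `⟨ρ',e⟩ = ⟨ρ,e'⟩ = 0`. -/
theorem stmt3 {K : Type*} [Field K] [CharZero K] {M : Type*} [AddCommGroup M]
    (ρ ρ' : M →+ ℤ) (e e' : M)
    (h : homDer K ρ e ≠ 0) (h' : homDer K ρ' e' ≠ 0) :
    homDer K ρ e ∘ₗ homDer K ρ' e' = homDer K ρ' e' ∘ₗ homDer K ρ e ↔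
      (CollinearCovectors ρ ρ' ∧ ρ e = ρ e') ∨
      (¬ CollinearCovectors ρ ρ' ∧ ρ' e = 0 ∧ ρ e' = 0) := by
  have hρ : ρ ≠ 0 := fun hz => h (by rw [hz]; exact homDer_eq_zero K e)
  have hρ' : ρ' ≠ 0 := fun hz => h' (by rw [hz]; exact homDer_eq_zero K e')
  -- Step 1: commutation iff the pointwise condition
  have key : (homDer K ρ e ∘ₗ homDer K ρ' e' = homDer K ρ' e' ∘ₗ homDer K ρ e) ↔
      ∀ m : M, ρ' m * ρ e' = ρ m * ρ' e := by
    constructor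
    · intro H m
      have h1 := LinearMap.congr_fun H (AddMonoidAlgebra.single m (1 : K))
      rw [LinearMap.comp_apply, LinearMap.comp_apply, homDer_single, map_smul,
        homDer_single, homDer_single, map_smul, homDer_single,
        smul_smul, smul_smul, add_right_comm m e' e] at h1
      have h2 := smul_single_inj _ _ _ h1
      have h3 : (ρ' m : ℤ) * ρ (m + e') = ρ m * ρ' (m + e) := by exact_mod_cast h2
      simp only [map_add] at h3
      linarith [mul_comm (ρ' m) (ρ m)]
    · intro H
      apply lm_ext
      intro m c
      rw [LinearMap.comp_apply, LinearMap.comp_apply, homDer_single, map_smul,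
        homDer_single, homDer_single, map_smul, homDer_single,
        smul_smul, smul_smul, add_right_comm m e' e]
      congr 1
      have h3 : (ρ' m : ℤ) * ρ (m + e') = ρ m * ρ' (m + e) := by
        simp only [map_add]
        linear_combination H m
      exact_mod_cast h3
  rw [key]
  constructor
  · intro H
    have he'0 : ρ' e = 0 ∨ ρ e = ρ e' := by
      by_cases hb : ρ' e = 0
      · exact Or.inl hb
      · right
        have := H e
        rw [mul_comm (ρ e) (ρ' e)] at this
        exact (mul_left_cancel₀ hb (by rw [mul_comm (ρ' e) (ρ e')] at this ⊢; linarith)).symm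
    by_cases hb : ρ' e = 0
    · -- then ρ e' = 0 too (else ρ' = 0)
      have he' : ρ e' = 0 := by
        by_contra ha
        apply hρ'
        ext m
        have := H m
        rw [hb, mul_zero, mul_eq_zero] at this
        simpa [ha] using this
      by_cases hc : CollinearCovectors ρ ρ'
      · left
        refine ⟨hc, ?_⟩
        obtain ⟨a, b, hab, hcl⟩ := hc
        have ha : a ≠ 0 := by
          rintro rfl
          simp only [zero_smul] at hcl
          exact smul_covec_ne_zero (hab.resolve_left (fun hh => hh rfl)) hρ' hcl.symm
        have := DFunLike.congr_fun hcl e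
        simp only [AddMonoidHom.smul_apply, smul_eq_mul, hb, mul_zero] at this
        rcases mul_eq_zero.mp this with h0 | h0
        · exact absurd h0 ha
        · rw [h0, he']
      · exact Or.inr ⟨hc, hb, he'⟩
    · have heq := he'0.resolve_left hb
      left
      exact ⟨⟨ρ' e, ρ e', Or.inl hb, by
        ext m
        simp only [AddMonoidHom.smul_apply, smul_eq_mul]
        linear_combination - H m⟩, heq⟩
  · rintro (⟨⟨a, b, hab, hcl⟩, heq⟩ | ⟨_, h1, h2⟩)
    · intro m
      have ha : a ≠ 0 := by
        rintro rfl
        simp only [zero_smul] at hcl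
        exact smul_covec_ne_zero (hab.resolve_left (fun hh => hh rfl)) hρ' hcl.symm
      have hb : b ≠ 0 := by
        rintro rfl
        simp only [zero_smul] at hcl
        exact smul_covec_ne_zero ha hρ hcl
      have hm := DFunLike.congr_fun hcl m
      have he := DFunLike.congr_fun hcl e
      simp only [AddMonoidHom.smul_apply, smul_eq_mul] at hm he
      apply mul_left_cancel₀ hb
      calc b * (ρ' m * ρ e') = (b * ρ' m) * ρ e' := by ring
        _ = (a * ρ m) * ρ e' := by rw [hm]
        _ = (a * ρ m) * ρ e := by rw [heq]
        _ = ρ m * (a * ρ e) := by ring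
        _ = ρ m * (b * ρ' e) := by rw [he]
        _ = b * (ρ m * ρ' e) := by ring
    · intro m
      rw [h1, h2, mul_zero, mul_zero]
end

section
/- If U is a locally nilpotent derivation of a finitely generated commutative K-algebra A, then the adjoint operator ad_U on Der(A) is locally nilpotent: for every derivation V of A there exists N such that ad_U^m(V) = 0 for all m > N. -/
/-- if `U` is a locally nilpotent derivation of a finitely generated
commutative `K`-algebra `A`, then `ad_U` is locally nilpotent on `Der(A)`:
for every derivation `V` there is `N` with `ad_U^m(V) = 0` for all `m > N`. -/
theorem stmt4 {K A : Type*} [Field K] [CharZero K] [CommRing A] [Algebra K A]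
    (hfg : Algebra.FiniteType K A)
    (U : Derivation K A A)
    (hU : ∀ a : A, ∃ n : ℕ, ((U : A →ₗ[K] A) ^ n) a = 0) :
    ∀ V : Derivation K A A, ∃ N : ℕ, ∀ m : ℕ, N < m →
      (fun W : Derivation K A A => ⁅U, W⁆)^[m] V = 0 := by
  intro V
  set U' : Module.End K A := (U : A →ₗ[K] A) with hU'
  set V' : Module.End K A := (V : A →ₗ[K] A) with hV'
  set L : Module.End K (Module.End K A) := LinearMap.mulLeft K U' with hL
  set R : Module.End K (Module.End K A) := LinearMap.mulRight K U' with hR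
  -- the iterate of the adjoint as a linear map is `(L - R)^m` applied to `V'`
  have iter_eq : ∀ m : ℕ,
      (((fun W : Derivation K A A => ⁅U, W⁆)^[m] V : Derivation K A A) : A →ₗ[K] A)
        = ((L - R) ^ m) V' := by
    intro m
    induction m with
    | zero => simp [hV']
    | succ m ih =>
      rw [Function.iterate_succ_apply']
      have : (((⁅U, (fun W : Derivation K A A => ⁅U, W⁆)^[m] V⁆ : Derivation K A A))
          : A →ₗ[K] A)
          = U' * (((fun W : Derivation K A A => ⁅U, W⁆)^[m] V : Derivation K A A) : A →ₗ[K] A)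
            - (((fun W : Derivation K A A => ⁅U, W⁆)^[m] V : Derivation K A A) : A →ₗ[K] A) * U' := by
        rfl
      rw [this, ih, pow_succ']
      simp [hL, hR, LinearMap.sub_apply, LinearMap.mulLeft_apply, LinearMap.mulRight_apply,
        Module.End.mul_apply, sub_mul, mul_sub]
  -- key pointwise vanishing
  have key : ∀ a : A, ∃ Na : ℕ, ∀ m k : ℕ, Na < m →
      (U' ^ k) (V' ((U' ^ (m - k)) a)) = 0 := by
    intro a
    obtain ⟨n, hn⟩ := hU a
    have hg : ∀ j : ℕ, ∃ e : ℕ, (U' ^ e) (V' ((U' ^ j) a)) = 0 := fun j => hU _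
    choose g hgspec using hg
    set S : ℕ := (Finset.range n).sup g with hS
    refine ⟨n + S, fun m k hm => ?_⟩
    set j : ℕ := m - k with hj
    by_cases hjn : n ≤ j
    · have : (U' ^ j) a = 0 := by
        have : U' ^ j = U' ^ (j - n) * U' ^ n := by
          rw [← pow_add]; congr 1; omega
        rw [this, Module.End.mul_apply, hn, map_zero]
      rw [this, map_zero, map_zero]
    · push_neg at hjn
      have hgle : g j ≤ S := Finset.le_sup (Finset.mem_range.mpr hjn)
      have hk : g j < k := by omega
      have : U' ^ k = U' ^ (k - g j) * U' ^ (g j) := by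
        rw [← pow_add]; congr 1; omega
      rw [this, Module.End.mul_apply, hgspec j, map_zero]
  choose f hf using key
  obtain ⟨s, hs⟩ := hfg
  refine ⟨s.sup f, fun m hm => ?_⟩
  have hzero : ∀ a ∈ (s : Set A), ((fun W : Derivation K A A => ⁅U, W⁆)^[m] V) a
      = (0 : Derivation K A A) a := by
    intro a ha
    have hma : f a < m := lt_of_le_of_lt (Finset.le_sup (by exact_mod_cast ha)) hm
    have : (((fun W : Derivation K A A => ⁅U, W⁆)^[m] V : Derivation K A A) : A →ₗ[K] A) a = 0 := by
      rw [iter_eq m]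
      letI : HasDistribNeg (Module.End K (Module.End K A)) :=
        @NonUnitalNonAssocRing.toHasDistribNeg (Module.End K (Module.End K A)) inferInstance
      have hcomm : Commute L (-R) :=
        (LinearMap.commute_mulLeft_right (R := K) U' U').neg_right
      have expand : (L - R) ^ m = ∑ k ∈ Finset.range (m + 1),
          L ^ k * (-R) ^ (m - k) * (m.choose k : Module.End K (Module.End K A)) := by
        rw [sub_eq_add_neg L R, hcomm.add_pow]
      rw [expand]
      rw [LinearMap.sum_apply, LinearMap.sum_apply]
      refine Finset.sum_eq_zero fun k hk => ?_
      have hL' : L ^ k = LinearMap.mulLeft K (U' ^ k) := LinearMap.pow_mulLeft K (Module.End K A) U' k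
      have hR' : (-R) ^ (m - k) = (-1 : Module.End K (Module.End K A)) ^ (m - k)
          * LinearMap.mulRight K (U' ^ (m - k)) := by
        rw [neg_pow R (m - k), LinearMap.pow_mulRight K (Module.End K A)]
      have hterm : (U' ^ k) (V' ((U' ^ (m - k)) a)) = 0 := hf a m k hma
      simp only [Module.End.mul_apply, hL', hR']
      have : ((m.choose k : Module.End K (Module.End K A)) V') = (m.choose k : ℕ) • V' := by
        simp [Module.End.natCast_apply]
      rw [this]
      simp only [map_nsmul, map_smul]
      have h2 : ((-1 : Module.End K (Module.End K A)) ^ (m - k)) = ((-1 : K) ^ (m - k)) • 1 := by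
        simp [← Algebra.algebraMap_eq_smul_one, map_pow]
      rw [h2]
      simp only [LinearMap.smul_apply, Module.End.one_apply, LinearMap.mulLeft_apply,
        LinearMap.mulRight_apply, Module.End.mul_apply, LinearMap.smul_apply, map_smul,
        map_nsmul]
      rw [hterm]
      simp
    simpa using this
  exact Derivation.ext_of_adjoin_eq_top _ hs hzero
end

section
/- If ∂ is a locally nilpotent derivation of the M-graded semigroup algebra A with homogeneous decomposition ∂ = Σ_e ∂_e, then for any face τ of the Newton polytope N(∂) the truncated derivation ∂_τ = Σ_{e ∈ τ ∩ M} ∂_e is again locally nilpotent. In particular, every vertex component ∂_e is locally nilpotent. -/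
/-- `x` belongs to the semigroup algebra `A` of the cone `σ^∨ ∩ M = {m | ⟨ρ_i,m⟩ ≥ 0}`. -/
def InConeAlg {K : Type*} [Field K] {M : Type*} [AddCommGroup M] {k : ℕ}
    (ρs : Fin k → (M →+ ℤ)) (x : AddMonoidAlgebra K M) : Prop :=
  ∀ m ∈ x.coeff.support, ∀ i, 0 ≤ ρs i m

section Aux
variable {K : Type*} [Field K] {M : Type*} [AddCommGroup M]

lemma homDer_apply (ρ : M →+ ℤ) (e : M) (x : AddMonoidAlgebra K M) :
    (homDer K ρ e x).coeff = x.coeff.sum fun m a => Finsupp.single (m + e) (a * ((ρ m : ℤ) : K)) := by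
  rw [homDer, LinearMap.comp_apply]
  erw [Finsupp.lsum_apply]
  rw [AddMonoidAlgebra.coeff_finsuppSum]
  refine Finsupp.sum_congr fun m hm => ?_
  rw [LinearMap.toSpanSingleton_apply]
  show (x.coeff m • ((ρ m : ℤ) • AddMonoidAlgebra.single (m + e) (1:K))).coeff = _
  rw [AddMonoidAlgebra.coeff_smul, AddMonoidAlgebra.coeff_smul, AddMonoidAlgebra.coeff_single,
    Finsupp.smul_single, Finsupp.smul_single]
  congr 1
  rw [zsmul_eq_mul, mul_one, smul_eq_mul]
  rfl

lemma mem_support_homDer (ρ : M →+ ℤ) (e : M) (x : AddMonoidAlgebra K M)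
    (m : M) (hm : m ∈ (homDer K ρ e x).coeff.support) :
    ∃ m₀ ∈ x.coeff.support, m = m₀ + e := by
  rw [homDer_apply] at hm
  obtain ⟨m₀, hm₀, hmem⟩ := Finsupp.mem_support_finset_sum m hm
  exact ⟨m₀, hm₀, Finset.mem_singleton.mp (Finsupp.support_single_subset hmem)⟩

lemma mem_support_sumDer (s : Finset M) (c : M → (M →+ ℤ)) (x : AddMonoidAlgebra K M)
    (m : M) (hm : m ∈ ((∑ e ∈ s, homDer K (c e) e) x).coeff.support) :
    ∃ e ∈ s, ∃ m₀ ∈ x.coeff.support, m = m₀ + e := by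
  rw [LinearMap.sum_apply, AddMonoidAlgebra.coeff_sum] at hm
  obtain ⟨e, he, hme⟩ := Finsupp.mem_support_finset_sum m hm
  obtain ⟨m₀, hm₀, rfl⟩ := mem_support_homDer _ _ _ m hme
  exact ⟨e, he, m₀, hm₀, rfl⟩

omit [AddCommGroup M] in
lemma filter_eq_self_of (p : M → Prop) [DecidablePred p] (x : M →₀ K)
    (h : ∀ m ∈ x.support, p m) : x.filter p = x :=
  (Finsupp.filter_eq_self_iff _ _).2 fun m hm => h m (Finsupp.mem_support_iff.2 hm)

omit [AddCommGroup M] in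
lemma filter_eq_zero_of (p : M → Prop) [DecidablePred p] (x : M →₀ K)
    (h : ∀ m ∈ x.support, ¬ p m) : x.filter p = 0 :=
  (Finsupp.filter_eq_zero_iff _ _).2 fun m hp => by
    by_contra hx0
    exact h m (Finsupp.mem_support_iff.2 hx0) hp

/-- The key grading lemma. -/
lemma key_iter (l : M →+ ℤ) (E : Finset M) (c : M → (M →+ ℤ)) (L : ℤ)
    (hE : ∀ e ∈ E, l e ≤ L) (d : ℤ) (x : AddMonoidAlgebra K M)
    (hx : ∀ m ∈ x.coeff.support, l m = d) (N : ℕ) :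
    (∀ m ∈ ((⇑(∑ e ∈ E, homDer K (c e) e))^[N] x).coeff.support, l m ≤ d + N * L) ∧
    Finsupp.filter (fun m => l m = d + N * L)
        ((⇑(∑ e ∈ E, homDer K (c e) e))^[N] x).coeff
      = ((⇑(∑ e ∈ E.filter (fun e => l e = L), homDer K (c e) e))^[N] x).coeff := by
  induction N with
  | zero =>
      constructor
      · intro m hm; simpa using le_of_eq (hx m (by simpa using hm))
      · simp only [Function.iterate_zero, id_eq, Nat.cast_zero, zero_mul, add_zero]
        exact filter_eq_self_of _ x.coeff hx
  | succ n ih =>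
      obtain ⟨hy1, hy2⟩ := ih
      set D : AddMonoidAlgebra K M →ₗ[K] AddMonoidAlgebra K M :=
        ∑ e ∈ E, homDer K (c e) e with hD
      set Dτ : AddMonoidAlgebra K M →ₗ[K] AddMonoidAlgebra K M :=
        ∑ e ∈ E.filter (fun e => l e = L), homDer K (c e) e with hDτ
      set y : AddMonoidAlgebra K M := (⇑D)^[n] x with hy
      have hcast : (d + (n+1 : ℕ) * L) = (d + n * L) + L := by push_cast; ring
      have hstep : (⇑D)^[n+1] x = D y := Function.iterate_succ_apply' _ _ _
      have hstepτ : (⇑Dτ)^[n+1] x = Dτ ((⇑Dτ)^[n] x) := Function.iterate_succ_apply' _ _ _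
      constructor
      · intro m hm
        rw [hstep] at hm
        obtain ⟨e, he, m₀, hm₀, rfl⟩ := mem_support_sumDer E c y m hm
        rw [map_add, hcast]
        exact add_le_add (hy1 m₀ hm₀) (hE e he)
      · rw [hstep, hstepτ]
        set yt : AddMonoidAlgebra K M :=
          AddMonoidAlgebra.ofCoeff (y.coeff.filter (fun m => l m = d + n * L)) with hyt
        set yr : AddMonoidAlgebra K M :=
          AddMonoidAlgebra.ofCoeff (y.coeff.filter (fun m => ¬ l m = d + n * L)) with hyr
        have hy2' : (⇑Dτ)^[n] x = yt := by
          apply AddMonoidAlgebra.ext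
          rw [← hy2]
        rw [hy2']
        have hsplit : y = yt + yr :=
          AddMonoidAlgebra.ext (Finsupp.filter_pos_add_filter_neg y.coeff _).symm
        have hytsupp : ∀ m ∈ yt.coeff.support, l m = d + n * L := by
          intro m hm
          rw [hyt, AddMonoidAlgebra.coeff_ofCoeff, Finsupp.support_filter, Finset.mem_filter] at hm
          exact hm.2
        have hyrsupp : ∀ m ∈ yr.coeff.support, l m ≤ d + n * L - 1 := by
          intro m hm
          rw [hyr, AddMonoidAlgebra.coeff_ofCoeff, Finsupp.support_filter, Finset.mem_filter] at hm
          exact Int.le_sub_one_of_lt (lt_of_le_of_ne (hy1 m hm.1) hm.2)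
        -- split D into the τ-part and the rest
        have hDsplit : D = Dτ + ∑ e ∈ E.filter (fun e => ¬ l e = L), homDer K (c e) e := by
          rw [hD, hDτ, Finset.sum_filter_add_sum_filter_not]
        set Dσ : AddMonoidAlgebra K M →ₗ[K] AddMonoidAlgebra K M :=
          ∑ e ∈ E.filter (fun e => ¬ l e = L), homDer K (c e) e with hDσ
        have expand : D y = Dτ yt + (Dσ yt + D yr) := by
          calc D y = D yt + D yr := by rw [hsplit, map_add]
          _ = (Dτ yt + Dσ yt) + D yr := by rw [hDsplit]; rfl
          _ = _ := by ring_nf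
        rw [expand, AddMonoidAlgebra.coeff_add, AddMonoidAlgebra.coeff_add, Finsupp.filter_add,
          Finsupp.filter_add]
        have h1 : Finsupp.filter (fun m => l m = d + (n+1 : ℕ) * L) (Dτ yt).coeff
            = (Dτ yt).coeff := by
          refine filter_eq_self_of _ _ ?_
          intro m hm
          obtain ⟨e, he, m₀, hm₀, rfl⟩ := mem_support_sumDer _ c yt m hm
          rw [Finset.mem_filter] at he
          rw [map_add, hytsupp m₀ hm₀, he.2, hcast]
        have h2 : Finsupp.filter (fun m => l m = d + (n+1 : ℕ) * L) (Dσ yt).coeff = 0 := by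
          refine filter_eq_zero_of _ _ ?_
          intro m hm
          obtain ⟨e, he, m₀, hm₀, rfl⟩ := mem_support_sumDer _ c yt m hm
          rw [Finset.mem_filter] at he
          rw [map_add, hytsupp m₀ hm₀, hcast]
          have : l e < L := lt_of_le_of_ne (hE e he.1) he.2
          omega
        have h3 : Finsupp.filter (fun m => l m = d + (n+1 : ℕ) * L) (D yr).coeff = 0 := by
          refine filter_eq_zero_of _ _ ?_
          intro m hm
          obtain ⟨e, he, m₀, hm₀, rfl⟩ := mem_support_sumDer _ c yr m hm
          rw [map_add, hcast]
          have h4 := hyrsupp m₀ hm₀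
          have h5 := hE e he
          omega
        rw [h1, h2, h3, add_zero, add_zero]

end Aux

/-- let `∂ = Σ_{e ∈ E} ∂_e` (with `∂_e = ∂_{c(e),e}` homogeneous of degree
`e`) be a derivation of the semigroup algebra `A` of the cone which is locally nilpotent
on `A`. Then for any face `τ` of the Newton polytope `N(∂) = conv(E)` — cut out as the
locus where an integral linear functional `l` attains its maximum on `E` — the truncation
`∂_τ = Σ_{e ∈ τ ∩ M} ∂_e` is again locally nilpotent on `A`. In particular, every vertex
component `∂_e` is locally nilpotent. -/
theorem stmt9 {K : Type*} [Field K] [CharZero K] {M : Type*} [AddCommGroup M] (k : ℕ)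
    (ρs : Fin k → (M →+ ℤ))
    (E : Finset M) (c : M → (M →+ ℤ))
    (hpres : ∀ x : AddMonoidAlgebra K M, InConeAlg ρs x →
        InConeAlg ρs ((∑ e ∈ E, homDer K (c e) e) x))
    (hLND : ∀ x : AddMonoidAlgebra K M, InConeAlg ρs x →
        ∃ N : ℕ, (⇑(∑ e ∈ E, homDer K (c e) e))^[N] x = 0)
    (l : M →+ ℤ) :
    ∀ x : AddMonoidAlgebra K M, InConeAlg ρs x →
      ∃ N : ℕ,
        (⇑(∑ e ∈ E.filter (fun e => ∀ e' ∈ E, l e' ≤ l e), homDer K (c e) e))^[N] x = 0 := by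
  rcases E.eq_empty_or_nonempty with rfl | hEne
  · intro x hx
    rw [Finset.filter_empty]
    exact hLND x hx
  set L : ℤ := E.sup' hEne (fun e => l e) with hL
  have hE : ∀ e ∈ E, l e ≤ L := fun e he => Finset.le_sup' _ he
  have hfilt : E.filter (fun e => ∀ e' ∈ E, l e' ≤ l e) = E.filter (fun e => l e = L) := by
    refine Finset.filter_congr fun e he => ?_
    constructor
    · intro h
      exact le_antisymm (hE e he) (Finset.sup'_le _ _ h)
    · intro h e' he'
      rw [h]; exact hE e' he'
  rw [hfilt]
  set Dτ : AddMonoidAlgebra K M →ₗ[K] AddMonoidAlgebra K M :=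
    ∑ e ∈ E.filter (fun e => l e = L), homDer K (c e) e with hDτ
  -- locally nilpotent on homogeneous elements
  have hom_case : ∀ (d : ℤ) (x : AddMonoidAlgebra K M), InConeAlg ρs x →
      (∀ m ∈ x.coeff.support, l m = d) → ∃ N : ℕ, (⇑Dτ)^[N] x = 0 := by
    intro d x hcone hhom
    obtain ⟨N, hN⟩ := hLND x hcone
    refine ⟨N, ?_⟩
    have := (key_iter l E c L hE d x hhom N).2
    rw [hN] at this
    apply AddMonoidAlgebra.ext
    rw [← this, AddMonoidAlgebra.coeff_zero, Finsupp.filter_zero]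
  -- zero is fixed by iterates
  have iter_zero : ∀ (n : ℕ), (⇑Dτ)^[n] (0 : AddMonoidAlgebra K M) = 0 :=
    fun n => Function.iterate_fixed (map_zero Dτ) n
  have mono : ∀ (x : AddMonoidAlgebra K M) (N N' : ℕ), N ≤ N' → (⇑Dτ)^[N] x = 0 →
      (⇑Dτ)^[N'] x = 0 := by
    intro x N N' hle h0
    have : (⇑Dτ)^[N' - N + N] x = 0 := by
      rw [Function.iterate_add_apply, h0, iter_zero]
    rwa [Nat.sub_add_cancel hle] at this
  -- decompose an arbitrary x into homogeneous pieces, by induction on the degree set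
  suffices h : ∀ (s : Finset ℤ) (x : AddMonoidAlgebra K M), (∀ m ∈ x.coeff.support, l m ∈ s) →
      InConeAlg ρs x → ∃ N : ℕ, (⇑Dτ)^[N] x = 0 by
    intro x hx
    exact h (x.coeff.support.image (fun m => l m)) x
      (fun m hm => Finset.mem_image_of_mem _ hm) hx
  intro s
  induction s using Finset.induction_on with
  | empty =>
      intro x hsupp _
      have : x = 0 := by
        ext m
        by_contra hm
        exact absurd (hsupp m (Finsupp.mem_support_iff.2 hm)) (Finset.notMem_empty _)
      exact ⟨0, by simpa using this⟩
  | insert d s hd ih =>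
      intro x hsupp hcone
      set xt : AddMonoidAlgebra K M :=
        AddMonoidAlgebra.ofCoeff (x.coeff.filter (fun m => l m = d)) with hxt
      set xr : AddMonoidAlgebra K M :=
        AddMonoidAlgebra.ofCoeff (x.coeff.filter (fun m => ¬ l m = d)) with hxr
      have hsplit : x = xt + xr :=
        AddMonoidAlgebra.ext (Finsupp.filter_pos_add_filter_neg x.coeff _).symm
      have hconet : InConeAlg ρs xt := by
        intro m hm i
        rw [hxt, AddMonoidAlgebra.coeff_ofCoeff, Finsupp.support_filter, Finset.mem_filter] at hm
        exact hcone m hm.1 i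
      have hconer : InConeAlg ρs xr := by
        intro m hm i
        rw [hxr, AddMonoidAlgebra.coeff_ofCoeff, Finsupp.support_filter, Finset.mem_filter] at hm
        exact hcone m hm.1 i
      obtain ⟨N1, hN1⟩ := hom_case d xt hconet (by
        intro m hm
        rw [hxt, AddMonoidAlgebra.coeff_ofCoeff, Finsupp.support_filter, Finset.mem_filter] at hm
        exact hm.2)
      obtain ⟨N2, hN2⟩ := ih xr (by
        intro m hm
        rw [hxr, AddMonoidAlgebra.coeff_ofCoeff, Finsupp.support_filter, Finset.mem_filter] at hm
        have := hsupp m hm.1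
        rcases Finset.mem_insert.mp this with h | h
        · exact absurd h hm.2
        · exact h) hconer
      refine ⟨max N1 N2, ?_⟩
      have hlin : (⇑Dτ)^[max N1 N2] x
          = (⇑Dτ)^[max N1 N2] xt + (⇑Dτ)^[max N1 N2] xr := by
        rw [hsplit]
        simp only [← Module.End.pow_apply, map_add]
      rw [hlin, mono xt N1 _ (le_max_left _ _) hN1, mono xr N2 _ (le_max_right _ _) hN2,
        add_zero]
end

section
/- Let g = α₁ g₁ ⋯ α_l g_l α_{l+1} be an automorphism of 𝔸^n where each g_i has Jacobian 1 and each α_j is affine, and suppose Jac(g) = 1. Then there exist h₁,…,h_l with Jac(h_i) = 1 and volume-preserving affine maps β₁,…,β_{l+1} ∈ SAff_n such that g = β₁ h₁ ⋯ β_l h_l β_{l+1}; explicitly one can take h_i = γ_i g_i γ_i⁻¹ and β_j = γ_{j−1} α_j γ_j⁻¹ for suitable scalar dilations γ_j. -/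
open MvPolynomial

/-- The Jacobian determinant of a polynomial automorphism of `𝔸ⁿ`. -/
noncomputable def jacAut {K : Type*} [CommRing K] {n : ℕ}
    (g : MvPolynomial (Fin n) K ≃ₐ[K] MvPolynomial (Fin n) K) : MvPolynomial (Fin n) K :=
  (Matrix.of fun i j : Fin n => MvPolynomial.pderiv j (g (MvPolynomial.X i))).det

/-- A polynomial automorphism is affine if each component has total degree at most `1`. -/
def IsAffineAut {K : Type*} [CommRing K] {n : ℕ}
    (g : MvPolynomial (Fin n) K ≃ₐ[K] MvPolynomial (Fin n) K) : Prop :=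
  ∀ i : Fin n, (g (MvPolynomial.X i)).totalDegree ≤ 1

/-- A scalar dilation `x ↦ c · x`. -/
def IsDilation {K : Type*} [CommRing K] {n : ℕ}
    (g : MvPolynomial (Fin n) K ≃ₐ[K] MvPolynomial (Fin n) K) : Prop :=
  ∃ c : K, c ≠ 0 ∧ ∀ i : Fin n, g (MvPolynomial.X i) = MvPolynomial.C c * MvPolynomial.X i

section HelpersB
variable {K : Type*} [CommRing K] {n : ℕ}

/-- Chain rule for algebra endomorphisms of polynomial rings. -/
theorem chainRule (φ : MvPolynomial (Fin n) K →ₐ[K] MvPolynomial (Fin n) K)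
    (p : MvPolynomial (Fin n) K) (j : Fin n) :
    pderiv j (φ p) = ∑ k : Fin n, φ (pderiv k p) * pderiv j (φ (X k)) := by
  induction p using MvPolynomial.induction_on with
  | C a => simp [AlgHom.commutes]
  | add p q hp hq => simp [map_add, hp, hq, add_mul, Finset.sum_add_distrib]
  | mul_X p i hp =>
      rw [map_mul, pderiv_mul, hp]
      have : ∀ k : Fin n, φ (pderiv k (p * X i)) * pderiv j (φ (X k)) =
          φ (pderiv k p) * pderiv j (φ (X k)) * φ (X i) +
          (if k = i then φ p * pderiv j (φ (X i)) else 0) := by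
        intro k
        rw [pderiv_mul, map_add, map_mul, map_mul, add_mul]
        congr 1
        · ring
        · rcases eq_or_ne k i with h | h
          · subst h; simp [pderiv_X_self]
          · simp [pderiv_X_of_ne h.symm, h]
      rw [Finset.sum_congr rfl fun k _ => this k, Finset.sum_add_distrib,
        ← Finset.sum_mul, Finset.sum_ite_eq' Finset.univ i]
      simp [add_comm]

theorem jacAut_one : jacAut (1 : MvPolynomial (Fin n) K ≃ₐ[K] MvPolynomial (Fin n) K) = 1 := by
  have : (Matrix.of fun i j : Fin n => pderiv j ((1 : MvPolynomial (Fin n) K ≃ₐ[K]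
      MvPolynomial (Fin n) K) (X i))) = 1 := by
    refine Matrix.ext fun i j => ?_
    classical
    simp [Matrix.one_apply, pderiv_X, Pi.single_apply, eq_comm]
  rw [jacAut, this, Matrix.det_one]

theorem jacAut_mul (f g : MvPolynomial (Fin n) K ≃ₐ[K] MvPolynomial (Fin n) K) :
    jacAut (f * g) = f (jacAut g) * jacAut f := by
  have key : (Matrix.of fun i j : Fin n => pderiv j ((f * g) (X i))) =
      (Matrix.of fun i k : Fin n => f (pderiv k (g (X i)))) *
      (Matrix.of fun k j : Fin n => pderiv j (f (X k))) := by
    refine Matrix.ext fun i j => ?_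
    simp only [Matrix.mul_apply, Matrix.of_apply, AlgEquiv.mul_apply]
    exact chainRule f.toAlgHom (g (X i)) j
  rw [jacAut, key, Matrix.det_mul, jacAut, jacAut]
  congr 1
  rw [show (f : MvPolynomial (Fin n) K → MvPolynomial (Fin n) K) =
    (f : MvPolynomial (Fin n) K →+* MvPolynomial (Fin n) K) from rfl, RingHom.map_det]
  congr 1

section HelpersA
variable {K : Type*} [CommRing K] {n : ℕ}

theorem single_eq_of_le_one {σ : Type*} [DecidableEq σ] {m : σ →₀ ℕ} {j : σ}
    (hdeg : m.sum (fun _ e => e) ≤ 1) (hj : m j ≠ 0) : m = Finsupp.single j 1 := by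
  have hmem : j ∈ m.support := Finsupp.mem_support_iff.2 hj
  have hle : m j ≤ m.sum (fun _ e => e) := Finset.single_le_sum (fun _ _ => Nat.zero_le _) hmem
  have hmj : m j = 1 := le_antisymm (hle.trans hdeg) (Nat.one_le_iff_ne_zero.2 hj)
  ext k
  rcases eq_or_ne k j with rfl | hk
  · simp [hmj]
  · simp only [Finsupp.single_apply, if_neg (Ne.symm hk)]
    by_contra hk0
    have hmemk : k ∈ m.support := Finsupp.mem_support_iff.2 hk0
    have : m j + m k ≤ m.sum (fun _ e => e) := by
      rw [Finsupp.sum]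
      exact Finset.add_le_sum (f := fun a => m a) (fun _ _ => Nat.zero_le _) hmem hmemk
        (Ne.symm hk)
    omega

theorem pderiv_totalDegree_le_one {p : MvPolynomial (Fin n) K} (hp : p.totalDegree ≤ 1)
    (j : Fin n) : pderiv j p = C (coeff (Finsupp.single j 1) p) := by
  classical
  conv_lhs => rw [p.as_sum, map_sum]
  rcases Finset.decidableMem (Finsupp.single j 1) p.support with hmem | hmem
  · rw [notMem_support_iff.1 hmem, map_zero]
    refine Finset.sum_eq_zero fun m hm => ?_
    have hmj : m j = 0 := by
      by_contra h
      exact hmem ((single_eq_of_le_one ((le_totalDegree hm).trans hp) h) ▸ hm)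
    rw [pderiv_monomial]
    simp [hmj]
  · rw [Finset.sum_eq_single (Finsupp.single j 1)]
    · rw [pderiv_monomial]
      rw [show (Finsupp.single j 1) j = 1 from Finsupp.single_eq_same, Nat.cast_one, mul_one,
        tsub_self, monomial_zero']
    · intro m hm hne
      have hmj : m j = 0 := by
        by_contra h
        exact hne (single_eq_of_le_one ((le_totalDegree hm).trans hp) h)
      rw [pderiv_monomial]
      simp [hmj]
    · intro h
      exact absurd hmem h

/-- The dilation automorphism `x ↦ c x`. -/
noncomputable def dil (c : Kˣ) : MvPolynomial (Fin n) K ≃ₐ[K] MvPolynomial (Fin n) K :=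
  AlgEquiv.ofAlgHom (aeval fun i => C (c : K) * X i) (aeval fun i => C ((c⁻¹ : Kˣ) : K) * X i)
    (by ext i; simp [← mul_assoc, ← C_mul])
    (by ext i; simp [← mul_assoc, ← C_mul])

@[simp] theorem dil_apply (c : Kˣ) (p : MvPolynomial (Fin n) K) :
    dil c p = aeval (fun i => C (c : K) * X i) p := rfl

@[simp] theorem dil_apply_X (c : Kˣ) (i : Fin n) : dil c (X i) = C (c : K) * X i := by simp

theorem algEquiv_ext_X {f g : MvPolynomial (Fin n) K ≃ₐ[K] MvPolynomial (Fin n) K}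
    (h : ∀ i, f (X i) = g (X i)) : f = g := by
  have h2 : (f : MvPolynomial (Fin n) K →ₐ[K] MvPolynomial (Fin n) K) =
      (g : MvPolynomial (Fin n) K →ₐ[K] MvPolynomial (Fin n) K) :=
    MvPolynomial.algHom_ext h
  exact AlgEquiv.ext fun x => DFunLike.congr_fun h2 x

theorem dil_mul (c c' : Kˣ) : (dil c : MvPolynomial (Fin n) K ≃ₐ[K] MvPolynomial (Fin n) K) *
    dil c' = dil (c * c') := by
  refine algEquiv_ext_X fun i => ?_
  rw [AlgEquiv.mul_apply, dil_apply_X, map_mul, dil_apply_X, dil_apply, aeval_C,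
    MvPolynomial.algebraMap_eq, ← mul_assoc, ← C_mul, mul_comm ((c' : K)) ((c : K)),
    dil_apply_X, Units.val_mul]

@[simp] theorem dil_one : (dil 1 : MvPolynomial (Fin n) K ≃ₐ[K] MvPolynomial (Fin n) K) = 1 :=
  algEquiv_ext_X fun i => by simp

@[simp] theorem dil_inv (c : Kˣ) :
    (dil c : MvPolynomial (Fin n) K ≃ₐ[K] MvPolynomial (Fin n) K)⁻¹ = dil c⁻¹ := by
  refine inv_eq_of_mul_eq_one_right ?_
  rw [dil_mul, mul_inv_cancel, dil_one]

theorem jacAut_dil (c : Kˣ) :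
    jacAut (dil c : MvPolynomial (Fin n) K ≃ₐ[K] MvPolynomial (Fin n) K) = C ((c : K) ^ n) := by
  have : (Matrix.of fun i j : Fin n => pderiv j ((dil c : MvPolynomial (Fin n) K ≃ₐ[K]
      MvPolynomial (Fin n) K) (X i))) = (C (c : K) : MvPolynomial (Fin n) K) •
      (1 : Matrix (Fin n) (Fin n) (MvPolynomial (Fin n) K)) := by
    refine Matrix.ext fun i j => ?_
    classical
    simp [pderiv_C_mul, pderiv_X, Matrix.one_apply, Pi.single_apply, eq_comm,
      Matrix.smul_apply, mul_ite, mul_one, mul_zero]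
  rw [jacAut, this, Matrix.det_smul, Matrix.det_one, mul_one, C_pow, Fintype.card_fin]

theorem map_C_algEquiv (e : MvPolynomial (Fin n) K ≃ₐ[K] MvPolynomial (Fin n) K) (a : K) :
    e (C a) = C a := by
  have := e.commutes a
  rwa [MvPolynomial.algebraMap_eq] at this

theorem totalDegree_dil_le (c : Kˣ) (p : MvPolynomial (Fin n) K) :
    (dil c p).totalDegree ≤ p.totalDegree := by
  rw [dil_apply]
  conv_lhs => rw [p.as_sum]
  rw [map_sum]
  refine totalDegree_finsetSum_le fun m hm => ?_
  rw [aeval_monomial]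
  refine le_trans (totalDegree_mul _ _) ?_
  rw [MvPolynomial.algebraMap_eq, totalDegree_C, zero_add]
  refine le_trans ?_ (le_totalDegree hm)
  rw [Finsupp.prod]
  refine le_trans (totalDegree_finset_prod _ _) ?_
  rw [Finsupp.sum]
  refine Finset.sum_le_sum fun i _ => ?_
  refine le_trans (totalDegree_pow _ _) ?_
  have hd : (C (c : K) * X i : MvPolynomial (Fin n) K).totalDegree ≤ 1 := by
    rw [C_mul_X_eq_monomial]
    refine le_trans (totalDegree_monomial_le _ _) ?_
    simp [Finsupp.sum_single_index]
  calc m i * (C (c : K) * X i : MvPolynomial (Fin n) K).totalDegree ≤ m i * 1 :=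
        Nat.mul_le_mul_left _ hd
    _ = m i := mul_one _

theorem jacAut_affine {α : MvPolynomial (Fin n) K ≃ₐ[K] MvPolynomial (Fin n) K}
    (hα : IsAffineAut α) :
    jacAut α = C ((Matrix.of fun i j : Fin n => coeff (Finsupp.single j 1) (α (X i))).det) := by
  have : (Matrix.of fun i j : Fin n => pderiv j (α (X i))) =
      (C : K →+* MvPolynomial (Fin n) K).mapMatrix
        (Matrix.of fun i j : Fin n => coeff (Finsupp.single j 1) (α (X i))) := by
    refine Matrix.ext fun i j => ?_
    exact pderiv_totalDegree_le_one (hα i) j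
  rw [jacAut, this, ← RingHom.map_det]

theorem jacAut_dil_conj (u v : Kˣ) (f : MvPolynomial (Fin n) K ≃ₐ[K] MvPolynomial (Fin n) K)
    (a : K) (hf : jacAut f = C a) :
    jacAut (dil u * f * (dil v)⁻¹) = C ((((v⁻¹ : Kˣ) : K)) ^ n * (a * (u : K) ^ n)) := by
  rw [dil_inv, jacAut_mul, jacAut_mul, hf, jacAut_dil, jacAut_dil, map_C_algEquiv,
    map_C_algEquiv, ← C_mul, ← C_mul]

theorem isAffineAut_dil_conj (u v : Kˣ)
    {f : MvPolynomial (Fin n) K ≃ₐ[K] MvPolynomial (Fin n) K} (hf : IsAffineAut f) :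
    IsAffineAut (dil u * f * (dil v)⁻¹) := by
  intro i
  have : ((dil u * f * (dil v)⁻¹ : MvPolynomial (Fin n) K ≃ₐ[K] MvPolynomial (Fin n) K)) (X i)
      = C ((v⁻¹ : Kˣ) : K) * dil u (f (X i)) := by
    rw [dil_inv, AlgEquiv.mul_apply, AlgEquiv.mul_apply, dil_apply_X, map_mul,
      map_C_algEquiv, map_mul, map_C_algEquiv]
  rw [this]
  refine le_trans (totalDegree_mul _ _) ?_
  rw [totalDegree_C, zero_add]
  exact le_trans (totalDegree_dil_le u _) (hf i)

theorem jac_forall₂_prod :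
    ∀ {L : List (MvPolynomial (Fin n) K ≃ₐ[K] MvPolynomial (Fin n) K)} {cs : List K},
    List.Forall₂ (fun f c => jacAut f = C c) L cs → jacAut L.prod = C cs.prod := by
  intro L cs h
  induction h with
  | nil => simpa using jacAut_one
  | @cons f c L' cs' hfc _ ih =>
      rw [List.prod_cons, List.prod_cons, jacAut_mul, ih, map_C_algEquiv, hfc, ← C_mul,
        mul_comm]

theorem forall₂_ofFn {A B : Type*} {R : A → B → Prop} :
    ∀ {m : ℕ} {f : Fin m → A} {f' : Fin m → B}, (∀ i, R (f i) (f' i)) →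
      List.Forall₂ R (List.ofFn f) (List.ofFn f') := by
  intro m
  induction m with
  | zero => intro f f' _; simp only [List.ofFn_zero]; exact List.Forall₂.nil
  | succ m ih =>
      intro f f' h
      rw [List.ofFn_succ, List.ofFn_succ]
      exact List.Forall₂.cons (h 0) (ih fun i => h i.succ)

theorem telescope {G : Type*} [Group G] :
    ∀ (l : ℕ) (a : Fin l → G) (γ : Fin (l + 1) → G),
      (List.ofFn fun i : Fin l => γ i.castSucc * a i * (γ i.succ)⁻¹).prod =
        γ 0 * (List.ofFn a).prod * (γ (Fin.last l))⁻¹ := by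
  intro l
  induction l with
  | zero =>
      intro a γ
      simp [List.ofFn_zero, show Fin.last 0 = 0 from rfl]
  | succ m ih =>
      intro a γ
      simp only [List.ofFn_succ, List.prod_cons]
      rw [show (fun i : Fin m => γ i.succ.castSucc * a i.succ * (γ i.succ.succ)⁻¹)
          = fun i : Fin m => (fun j : Fin (m+1) => γ j.succ) i.castSucc *
            ((fun i : Fin m => a i.succ) i) * ((fun j : Fin (m+1) => γ j.succ) i.succ)⁻¹ from
          funext fun i => by rw [← Fin.succ_castSucc]]
      rw [ih (fun i => a i.succ) (fun j => γ j.succ)]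
      simp only [Fin.castSucc_zero, Fin.succ_last]
      group

end HelpersA

end HelpersB

/-- if `g = α₁ g₁ ⋯ α_l g_l α_{l+1}` with `Jac(g_i) = 1`, `α_j` affine and
`Jac(g) = 1`, then `g = β₁ h₁ ⋯ β_l h_l β_{l+1}` with `Jac(h_i) = 1` and
`β_j ∈ SAff_n`; explicitly `h_i = γ_i g_i γ_i⁻¹`, `β_j = γ_{j−1} α_j γ_j⁻¹` for suitable
scalar dilations `γ_j` with `γ_0 = γ_{l+1} = id`. -/
theorem stmt12 {K : Type*} [Field K] [CharZero K] [IsAlgClosed K] (n l : ℕ)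
    (gs : Fin l → (MvPolynomial (Fin n) K ≃ₐ[K] MvPolynomial (Fin n) K))
    (α : Fin (l + 1) → (MvPolynomial (Fin n) K ≃ₐ[K] MvPolynomial (Fin n) K))
    (hg : ∀ i, jacAut (gs i) = 1)
    (hα : ∀ j, IsAffineAut (α j))
    (g : MvPolynomial (Fin n) K ≃ₐ[K] MvPolynomial (Fin n) K)
    (hdecomp : g = (List.ofFn fun i : Fin l => α i.castSucc * gs i).prod * α (Fin.last l))
    (hJac : jacAut g = 1) :
    ∃ (h : Fin l → (MvPolynomial (Fin n) K ≃ₐ[K] MvPolynomial (Fin n) K))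
      (β : Fin (l + 1) → (MvPolynomial (Fin n) K ≃ₐ[K] MvPolynomial (Fin n) K)),
      (∀ i, jacAut (h i) = 1) ∧
      (∀ j, IsAffineAut (β j) ∧ jacAut (β j) = 1) ∧
      g = (List.ofFn fun i : Fin l => β i.castSucc * h i).prod * β (Fin.last l) ∧
      ∃ γ : Fin (l + 2) → (MvPolynomial (Fin n) K ≃ₐ[K] MvPolynomial (Fin n) K),
        γ 0 = 1 ∧ γ (Fin.last (l + 1)) = 1 ∧
        (∀ j : Fin (l + 2), γ j = 1 ∨ IsDilation (γ j)) ∧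
        (∀ i : Fin l, h i = γ i.succ.castSucc * gs i * (γ i.succ.castSucc)⁻¹) ∧
        (∀ j : Fin (l + 1), β j = γ j.castSucc * α j * (γ j.succ)⁻¹) := by
  classical
  rcases Nat.eq_zero_or_pos n with hn | hn
  · subst hn
    have jzero : ∀ f : MvPolynomial (Fin 0) K ≃ₐ[K] MvPolynomial (Fin 0) K, jacAut f = 1 := by
      intro f; rw [jacAut]; exact Matrix.det_fin_zero
    exact ⟨gs, α, fun i => jzero _, fun j => ⟨hα j, jzero _⟩, hdecomp, fun _ => 1, rfl, rfl,
      fun j => Or.inl rfl, fun i => by rw [inv_one, mul_one, one_mul],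
      fun j => by rw [inv_one, mul_one, one_mul]⟩
  · set c : Fin (l+1) → K :=
      fun j => (Matrix.of fun i k : Fin n => coeff (Finsupp.single k 1) ((α j) (X i))).det
      with hc_def
    have hc : ∀ j, jacAut (α j) = C (c j) := fun j => jacAut_affine (hα j)
    have hgprod : jacAut g = C (∏ j : Fin (l+1), c j) := by
      have hL : g = ((List.ofFn fun i : Fin l => α i.castSucc * gs i) ++
          [α (Fin.last l)]).prod := by
        rw [List.prod_append, List.prod_cons, List.prod_nil, mul_one, hdecomp]
      have hF : List.Forall₂ (fun f cc => jacAut f = C cc)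
          ((List.ofFn fun i : Fin l => α i.castSucc * gs i) ++ [α (Fin.last l)])
          ((List.ofFn fun i : Fin l => c i.castSucc) ++ [c (Fin.last l)]) := by
        refine List.rel_append (forall₂_ofFn fun i => ?_)
          (List.Forall₂.cons (hc _) List.Forall₂.nil)
        rw [jacAut_mul, hg i, map_one, one_mul, hc]
      rw [hL, jac_forall₂_prod hF]
      congr 1
      rw [List.prod_append, List.prod_cons, List.prod_nil, mul_one, List.prod_ofFn]
      exact (Fin.prod_univ_castSucc c).symm
    have hcne : ∀ j, c j ≠ 0 := by
      intro j hj0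
      have h1 : jacAut ((α j)⁻¹ * α j) = 1 := by rw [inv_mul_cancel]; exact jacAut_one
      rw [jacAut_mul, hc j, map_C_algEquiv, hj0, C_0, zero_mul] at h1
      exact zero_ne_one h1
    have hprodall : (∏ j : Fin (l+1), c j) = 1 := by
      have h2 := hgprod.symm.trans hJac
      rw [← C_1] at h2
      exact C_injective (Fin n) K h2
    set c' : ℕ → K := fun k => if hk : k < l + 1 then c ⟨k, hk⟩ else 1 with hc'_def
    have hc'ne : ∀ k, c' k ≠ 0 := by
      intro k; by_cases hk : k ≤ l <;> simp [c', hk, hcne]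
    have hc'val : ∀ j : Fin (l+1), c' j.val = c j := by
      intro j; simp [c', Nat.lt_add_one_iff.mp j.isLt]
    have hprodne : ∀ m : ℕ, (∏ k ∈ Finset.range m, c' k) ≠ 0 :=
      fun m => Finset.prod_ne_zero_iff.2 fun k _ => hc'ne k
    have hprodrange : (∏ k ∈ Finset.range (l+1), c' k) = 1 := by
      rw [← Fin.prod_univ_eq_prod_range c' (l+1)]
      rw [Finset.prod_congr rfl fun (j : Fin (l+1)) _ => hc'val j]
      exact hprodall
    have hroot : ∀ e : K, e ≠ 0 → ∃ dd : K, dd ≠ 0 ∧ dd ^ n = e := by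
      intro e he
      obtain ⟨z, hz⟩ := IsAlgClosed.exists_pow_nat_eq e hn
      refine ⟨z, fun h0 => he ?_, hz⟩
      rw [← hz, h0, zero_pow hn.ne']
    choose rt hrt0 hrtpow using hroot
    set d : ℕ → K := fun m => if hm : m = 0 then 1 else rt _ (hprodne m) with hd_def
    have hdne : ∀ m, d m ≠ 0 := by
      intro m; by_cases hm : m = 0 <;> simp [d, hm, hrt0]
    have hdpow : ∀ m, d m ^ n = ∏ k ∈ Finset.range m, c' k := by
      intro m; by_cases hm : m = 0
      · subst hm; simp [d]
      · simp [d, hm, hrtpow]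
    set eu : Fin (l+2) → Kˣ :=
      fun j => if j.val = l + 1 then 1 else Units.mk0 (d j.val) (hdne j.val) with heu_def
    have heu_cast : ∀ j : Fin (l+1), ((eu j.castSucc : Kˣ) : K) = d j.val := by
      intro j
      have hne : (j : ℕ) ≠ l + 1 := by have := j.isLt; omega
      simp [eu, hne, Fin.coe_castSucc]
    have heu0 : eu 0 = 1 := by
      apply Units.ext
      have hne : ((0 : Fin (l+2)).val : ℕ) ≠ l + 1 := by simp
      simp [eu, hne, d]
    have heulast : eu (Fin.last (l+1)) = 1 := by simp [eu, Fin.val_last]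
    have hkey : ∀ j : Fin (l+1), ((eu j.succ : Kˣ) : K) ^ n =
        ((eu j.castSucc : Kˣ) : K) ^ n * c j := by
      intro j
      rcases Nat.lt_succ_iff_lt_or_eq.mp j.isLt with hlt | heq
      · have hval : ((eu j.succ : Kˣ) : K) = d (j.val + 1) := by
          simp [eu, Fin.val_succ, hlt.ne]
        rw [hval, heu_cast, hdpow, hdpow, Finset.prod_range_succ, hc'val]
      · have hval : eu j.succ = 1 := by
          apply Units.ext
          simp [eu, Fin.val_succ, heq]
        rw [hval, heu_cast, hdpow, heq, Units.val_one, one_pow, ← hc'val j, heq,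
          ← Finset.prod_range_succ, hprodrange]
    refine ⟨(fun i => dil (eu i.succ.castSucc) * gs i * (dil (eu i.succ.castSucc))⁻¹),
      (fun j => dil (eu j.castSucc) * α j * (dil (eu j.succ))⁻¹), ?_, ?_, ?_,
      ⟨fun j => dil (eu j), by show dil (eu 0) = 1; rw [heu0, dil_one],
        by show dil (eu (Fin.last (l+1))) = 1; rw [heulast, dil_one],
        fun j => Or.inr ⟨(eu j : K), Units.ne_zero _, fun i => dil_apply_X _ i⟩,
        fun i => rfl, fun j => rfl⟩⟩
    · intro i
      rw [jacAut_dil_conj _ _ _ 1 (by rw [hg i, C_1])]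
      rw [Units.val_inv_eq_inv_val, one_mul, inv_pow,
        inv_mul_cancel₀ (pow_ne_zero _ (Units.ne_zero _)), C_1]
    · intro j
      refine ⟨isAffineAut_dil_conj _ _ (hα j), ?_⟩
      rw [jacAut_dil_conj _ _ _ (c j) (hc j)]
      have hval : (((eu j.succ)⁻¹ : Kˣ) : K) ^ n * (c j * ((eu j.castSucc : Kˣ) : K) ^ n)
          = 1 := by
        rw [Units.val_inv_eq_inv_val, inv_pow, mul_comm (c j), ← hkey j,
          inv_mul_cancel₀ (pow_ne_zero _ (Units.ne_zero _))]
      rw [hval, C_1]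
    · have hfun : (fun i : Fin l => (dil (eu i.castSucc.castSucc) * α i.castSucc *
            (dil (eu i.castSucc.succ))⁻¹) * (dil (eu i.succ.castSucc) * gs i *
            (dil (eu i.succ.castSucc))⁻¹))
          = fun i : Fin l => (fun j : Fin (l+1) => dil (eu j.castSucc)) i.castSucc *
            ((fun i : Fin l => α i.castSucc * gs i) i) *
            ((fun j : Fin (l+1) => dil (eu j.castSucc)) i.succ)⁻¹ := by
        funext i
        simp only
        rw [Fin.succ_castSucc]
        group
      show g = (List.ofFn fun i : Fin l => (dil (eu i.castSucc.castSucc) * α i.castSucc *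
          (dil (eu i.castSucc.succ))⁻¹) * (dil (eu i.succ.castSucc) * gs i *
          (dil (eu i.succ.castSucc))⁻¹)).prod *
          (dil (eu (Fin.last l).castSucc) * α (Fin.last l) * (dil (eu (Fin.last l).succ))⁻¹)
      rw [hfun, telescope l (fun i => α i.castSucc * gs i) (fun j => dil (eu j.castSucc)),
        hdecomp]
      simp only [Fin.castSucc_zero, Fin.succ_last, heu0, heulast, dil_one, inv_one,
        mul_one, one_mul]
      group
end

section
/- Let a, b ≥ 0 be integers with ab > 2, and let G ⊆ Aut(𝔸²) be the group generated by the automorphisms (x,y) ↦ (x + t y^a, y) and (x,y) ↦ (x, y + s x^b) for all t, s ∈ K. Fix a primitive (ab−1)-th root of unity ω. Then the set S = {((x,y),(ωx, ω^b y)) : (x,y) ∈ 𝔸²} ⊆ 𝔸² × 𝔸² is invariant under the diagonal action of G; consequently G does not act 2-transitively on any subset of 𝔸² containing two pairs not related by this correspondence. -/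
/-- The triangular automorphism `(x, y) ↦ (x + t yᵃ, y)` of `𝔸²`. -/
def shearX {K : Type*} [Field K] (a : ℕ) (t : K) : Equiv.Perm (K × K) where
  toFun p := (p.1 + t * p.2 ^ a, p.2)
  invFun p := (p.1 - t * p.2 ^ a, p.2)
  left_inv p := by simp
  right_inv p := by simp

/-- The triangular automorphism `(x, y) ↦ (x, y + s xᵇ)` of `𝔸²`. -/
def shearY {K : Type*} [Field K] (b : ℕ) (s : K) : Equiv.Perm (K × K) where
  toFun p := (p.1, p.2 + s * p.1 ^ b)
  invFun p := (p.1, p.2 - s * p.1 ^ b)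
  left_inv p := by simp
  right_inv p := by simp

/-- for integers `a, b ≥ 0` with `ab > 2` and `ω` a primitive
`(ab−1)`-th root of unity, the set `S = {(P, Q) : Q = (ω x(P), ω^b y(P))}` is invariant
under the diagonal action of the group `G` generated by the two root subgroups
`(x,y) ↦ (x + t yᵃ, y)` and `(x,y) ↦ (x, y + s xᵇ)`; consequently `G` cannot send a pair
in `S` to a pair outside `S`, so it is not 2-transitive. -/
theorem stmt13 {K : Type*} [Field K] [CharZero K] [IsAlgClosed K]
    (a b : ℕ) (hab : 2 < a * b)
    (ω : K) (hω : ω ^ (a * b - 1) = 1)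
    (hωprim : ∀ j : ℕ, 0 < j → j < a * b - 1 → ω ^ j ≠ 1) :
    (∀ g ∈ Subgroup.closure
        (Set.range (shearX (K := K) a) ∪ Set.range (shearY (K := K) b)),
      ∀ P Q : K × K, Q = (ω * P.1, ω ^ b * P.2) → g Q = (ω * (g P).1, ω ^ b * (g P).2))
    ∧ ∀ (P Q P' Q' : K × K), Q = (ω * P.1, ω ^ b * P.2) →
        Q' ≠ (ω * P'.1, ω ^ b * P'.2) →
        ¬ ∃ g ∈ Subgroup.closure
            (Set.range (shearX (K := K) a) ∪ Set.range (shearY (K := K) b)),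
          g P = P' ∧ g Q = Q' := by
  have hpow : ω ^ (a * b) = ω := by
    have h1 : a * b = (a * b - 1) + 1 := by omega
    rw [h1, pow_succ, hω, one_mul]
  have key : ∀ g ∈ Subgroup.closure
      (Set.range (shearX (K := K) a) ∪ Set.range (shearY (K := K) b)),
      ∀ P : K × K, g (ω * P.1, ω ^ b * P.2) = (ω * (g P).1, ω ^ b * (g P).2) := by
    intro g hg
    induction hg using Subgroup.closure_induction with
    | mem g hg =>
      intro P
      rcases hg with ⟨t, rfl⟩ | ⟨s, rfl⟩
      · show ((ω * P.1 + t * (ω ^ b * P.2) ^ a, ω ^ b * P.2) : K × K) = _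
        have : (ω ^ b) ^ a = ω := by rw [← pow_mul, mul_comm b a, hpow]
        refine Prod.ext ?_ rfl
        show ω * P.1 + t * (ω ^ b * P.2) ^ a = ω * (P.1 + t * P.2 ^ a)
        rw [mul_pow, this]; ring
      · show ((ω * P.1, ω ^ b * P.2 + s * (ω * P.1) ^ b) : K × K) = _
        refine Prod.ext rfl ?_
        show ω ^ b * P.2 + s * (ω * P.1) ^ b = ω ^ b * (P.2 + s * P.1 ^ b)
        rw [mul_pow]; ring
    | one => intro P; rfl
    | mul x y hx hy ihx ihy =>
      intro P
      have : (x * y) (ω * P.1, ω ^ b * P.2) = x (y (ω * P.1, ω ^ b * P.2)) := rfl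
      rw [this, ihy, ihx]; rfl
    | inv x hx ih =>
      intro P
      have h := ih (x⁻¹ P)
      rw [show x (x⁻¹ P) = P from x.apply_symm_apply P] at h
      rw [← h, show ∀ q, x⁻¹ (x q) = q from x.symm_apply_apply]
  constructor
  · intro g hg P Q hQ
    subst hQ
    exact key g hg P
  · rintro P Q P' Q' hQ hne ⟨g, hg, hP, hQ'⟩
    apply hne
    rw [← hQ', hQ, key g hg P, hP]
end

section
/- Let G be a subgroup of the automorphism group of an affine variety X acting on X, and suppose a nonempty closed subset Y ⊆ X is G-invariant. If the closure of G (in the ind-group topology on Aut(X)) acts on X, then Y is invariant under this closure; consequently, if G acts with an open orbit O_G, then the open orbit of the closure of G coincides with O_G. -/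
/-- let a group `A` with a topology act on a space `X` so that for each
`x ∈ X` the orbit map `g ↦ g • x` is continuous, and let `G ≤ A` be a subgroup. Then any
nonempty closed `G`-invariant subset `Y ⊆ X` is invariant under the (topological) closure
of `G`; consequently, if `G` acts with an open orbit `O_G`, the open orbit of the closure
of `G` coincides with `O_G`. -/
theorem stmt18 {A X : Type*} [Group A] [TopologicalSpace A] [IsTopologicalGroup A]
    [TopologicalSpace X] [MulAction A X]
    (hcont : ∀ x : X, Continuous fun g : A => g • x)
    (G : Subgroup A) :
    (∀ Y : Set X, Y.Nonempty → IsClosed Y → (∀ g ∈ G, ∀ y ∈ Y, g • y ∈ Y) →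
      ∀ g ∈ G.topologicalClosure, ∀ y ∈ Y, g • y ∈ Y)
    ∧ ∀ x : X, IsOpen (MulAction.orbit G x) →
        MulAction.orbit G.topologicalClosure x = MulAction.orbit G x := by
  have part1 : ∀ Y : Set X, Y.Nonempty → IsClosed Y → (∀ g ∈ G, ∀ y ∈ Y, g • y ∈ Y) →
      ∀ g ∈ G.topologicalClosure, ∀ y ∈ Y, g • y ∈ Y := by
    intro Y _ hYc hGinv g hg y hy
    have hsub : (G : Set A) ⊆ (fun g : A => g • y) ⁻¹' Y := fun a ha => hGinv a ha y hy
    exact closure_minimal hsub (hYc.preimage (hcont y)) hg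
  refine ⟨part1, ?_⟩
  intro x hO
  apply subset_antisymm
  · rintro _ ⟨g, rfl⟩
    by_cases hne : (MulAction.orbit G x)ᶜ.Nonempty
    · by_contra h
      have hcomp : ∀ a ∈ G, ∀ y ∈ (MulAction.orbit G x)ᶜ, a • y ∈ (MulAction.orbit G x)ᶜ := by
        intro a ha y hy hay
        apply hy
        obtain ⟨b, hb⟩ := hay
        refine ⟨⟨a, ha⟩⁻¹ * b, ?_⟩
        have hb' : (b : A) • x = a • y := hb
        have : (a : A)⁻¹ • ((b : A) • x) = (a : A)⁻¹ • (a • y) := by rw [hb']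
        simpa [mul_smul, Subgroup.smul_def] using this
      have hinv : (g : A)⁻¹ ∈ G.topologicalClosure := G.topologicalClosure.inv_mem g.2
      have := part1 _ hne hO.isClosed_compl hcomp (g : A)⁻¹ hinv ((g : A) • x) h
      rw [← mul_smul, inv_mul_cancel, one_smul] at this
      exact this ⟨1, one_smul _ x⟩
    · rw [Set.not_nonempty_iff_eq_empty, Set.compl_empty_iff] at hne
      rw [hne]; trivial
  · rintro _ ⟨g, rfl⟩
    exact ⟨⟨g, Subgroup.le_topologicalClosure G g.2⟩, rfl⟩
end
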